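/- Let M ≥ 3 and 1 ≤ i ≤ M − 2. Then the function v ↦ v_i − 2v_{i+1} + v_{i+2} on ℂ^M is 𝔓_{[1,M]}-reducible. -/

import Mathlib

open scoped BigOperators

/-- The cubic polynomial `P(v) = v³ + 12γv − 4β²`. -/
noncomputable def Pcub (β γ v : ℂ) : ℂ := v ^ 3 + 12 * γ * v - 4 * β ^ 2

/-- `ℙ_{[a,b]}(v) = ∏_{a ≤ j < k ≤ b} P(v_k − v_j)` (indices 1-based). -/
noncomputable def Pprod (β γ : ℂ) (M a b : ℕ) (v : Fin M → ℂ) : ℂ :=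
  ∏ j : Fin M, ∏ k : Fin M,
    if a ≤ j.val + 1 ∧ j < k ∧ k.val + 1 ≤ b then Pcub β γ (v k - v j) else 1

/- `(𝔓_{[a,b]} g)(v) = Σ_{𝔰 ∈ 𝔖_{[a,b]}} sgn(𝔰) ℙ_{[a,b]}(𝔰·v) g(𝔰·v)`: the
sum runs over permutations fixing every (1-based) index outside `[a,b]`, and
`(𝔰·v)_j = v_{𝔰(j)}`. -/
open Classical in
noncomputable def Pop (β γ : ℂ) (M a b : ℕ) (g : (Fin M → ℂ) → ℂ) (v : Fin M → ℂ) : ℂ :=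
  ∑ s : Equiv.Perm (Fin M),
    if ∀ i : Fin M, ¬ (a ≤ i.val + 1 ∧ i.val + 1 ≤ b) → s i = i then
      ((Equiv.Perm.sign s : ℤ) : ℂ) * Pprod β γ M a b (v ∘ s) * g (v ∘ s)
    else 0

/-- `g` is `𝔓_{[a,b]}`-reducible if `𝔓_{[a,b]} g ≡ 0`. -/
def PReducible (β γ : ℂ) (M a b : ℕ) (g : (Fin M → ℂ) → ℂ) : Prop :=
  ∀ v : Fin M → ℂ, Pop β γ M a b g v = 0

open Finset Equiv

lemma Pprod_eq (β γ : ℂ) (M : ℕ) (u : Fin M → ℂ) :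
    Pprod β γ M 1 M u =
      ∏ p ∈ Finset.univ.filter (fun p : Fin M × Fin M => p.1 < p.2),
        Pcub β γ (u p.2 - u p.1) := by
  rw [Pprod, ← Finset.prod_product', Finset.prod_filter]
  rw [← Finset.univ_product_univ]
  apply Finset.prod_congr rfl
  intro p _
  by_cases h : p.1 < p.2
  · rw [if_pos ⟨Nat.le_add_left 1 _, h, p.2.isLt⟩, if_pos h]
  · rw [if_neg (fun hc => h hc.2.1), if_neg h]

lemma factor (β γ : ℂ) (M i : ℕ) (h1 : 1 ≤ i) (h2 : i + 2 ≤ M) (w : Fin M → ℂ)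
    (σ : Equiv.Perm (Fin M))
    (hσ : ∀ j : Fin M, ¬(i - 1 ≤ j.val ∧ j.val ≤ i + 1) → σ j = j) :
    Pprod β γ M 1 M (w ∘ σ) =
      (∏ p ∈ Finset.univ.filter (fun p : Fin M × Fin M =>
          p.1 < p.2 ∧ ¬((i - 1 ≤ p.1.val ∧ p.1.val ≤ i + 1) ∧
            (i - 1 ≤ p.2.val ∧ p.2.val ≤ i + 1))),
        Pcub β γ (w p.2 - w p.1)) *
      (Pcub β γ (w (σ ⟨i, by omega⟩) - w (σ ⟨i - 1, by omega⟩)) *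
       (Pcub β γ (w (σ ⟨i + 1, by omega⟩) - w (σ ⟨i - 1, by omega⟩)) *
        Pcub β γ (w (σ ⟨i + 1, by omega⟩) - w (σ ⟨i, by omega⟩)))) := by
  have hσinv : ∀ j : Fin M, ¬(i - 1 ≤ j.val ∧ j.val ≤ i + 1) → σ⁻¹ j = j := by
    intro j hj
    have h3 : σ⁻¹ (σ j) = σ⁻¹ j := by rw [hσ j hj]
    rw [Equiv.Perm.inv_def, Equiv.symm_apply_apply] at h3
    exact h3.symm
  have hiffgen : ∀ (τ : Equiv.Perm (Fin M)),
      (∀ j : Fin M, ¬(i - 1 ≤ j.val ∧ j.val ≤ i + 1) → τ j = j) →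
      ∀ j : Fin M, ((i - 1 ≤ (τ j).val ∧ (τ j).val ≤ i + 1) ↔
        (i - 1 ≤ j.val ∧ j.val ≤ i + 1)) := by
    intro τ hτ j
    constructor
    · intro hj
      by_contra hj'
      rw [hτ j hj'] at hj
      exact hj' hj
    · intro hj
      by_contra hj'
      have h3 : τ (τ j) = τ j := hτ _ hj'
      have h4 := τ.injective h3
      rw [h4] at hj'
      exact hj' hj
  have hmem : ∀ (τ : Equiv.Perm (Fin M)),
      (∀ j : Fin M, ¬(i - 1 ≤ j.val ∧ j.val ≤ i + 1) → τ j = j) →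
      ∀ p : Fin M × Fin M,
        p ∈ Finset.univ.filter (fun p : Fin M × Fin M =>
          p.1 < p.2 ∧ ¬((i - 1 ≤ p.1.val ∧ p.1.val ≤ i + 1) ∧
            (i - 1 ≤ p.2.val ∧ p.2.val ≤ i + 1))) →
        (τ p.1, τ p.2) ∈ Finset.univ.filter (fun p : Fin M × Fin M =>
          p.1 < p.2 ∧ ¬((i - 1 ≤ p.1.val ∧ p.1.val ≤ i + 1) ∧
            (i - 1 ≤ p.2.val ∧ p.2.val ≤ i + 1))) := by
    intro τ hτ p hp
    simp only [Finset.mem_filter, Finset.mem_univ, true_and] at hp ⊢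
    obtain ⟨hlt, hnb⟩ := hp
    have hiff := hiffgen τ hτ
    refine ⟨?_, fun hb => hnb ⟨(hiff p.1).mp hb.1, (hiff p.2).mp hb.2⟩⟩
    rw [Fin.lt_def] at hlt ⊢
    by_cases ha : i - 1 ≤ p.1.val ∧ p.1.val ≤ i + 1
    · have hb : ¬(i - 1 ≤ p.2.val ∧ p.2.val ≤ i + 1) := fun h => hnb ⟨ha, h⟩
      have e2 : τ p.2 = p.2 := hτ _ hb
      have b1 := (hiff p.1).mpr ha
      rw [e2]
      omega
    · have e1 : τ p.1 = p.1 := hτ _ ha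
      by_cases hb : i - 1 ≤ p.2.val ∧ p.2.val ≤ i + 1
      · have b2 := (hiff p.2).mpr hb
        rw [e1]
        omega
      · rw [e1, hτ _ hb]
        exact hlt
  rw [Pprod_eq]
  rw [← Finset.prod_filter_mul_prod_filter_not
    (Finset.univ.filter (fun p : Fin M × Fin M => p.1 < p.2))
    (fun p : Fin M × Fin M => (i - 1 ≤ p.1.val ∧ p.1.val ≤ i + 1) ∧
      (i - 1 ≤ p.2.val ∧ p.2.val ≤ i + 1))]
  rw [Finset.filter_filter, Finset.filter_filter, mul_comm]
  congr 1
  · -- mixed part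
    refine Finset.prod_nbij' (fun p => (σ p.1, σ p.2)) (fun p => (σ⁻¹ p.1, σ⁻¹ p.2))
      (hmem σ hσ) (hmem σ⁻¹ hσinv) ?_ ?_ ?_
    · intro p _
      ext <;> simp
    · intro p _
      ext <;> simp
    · intro p _
      rfl
  · -- triple part
    have hset : Finset.univ.filter (fun p : Fin M × Fin M =>
        p.1 < p.2 ∧ ((i - 1 ≤ p.1.val ∧ p.1.val ≤ i + 1) ∧
          (i - 1 ≤ p.2.val ∧ p.2.val ≤ i + 1))) =
        {((⟨i - 1, by omega⟩ : Fin M), (⟨i, by omega⟩ : Fin M)),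
         ((⟨i - 1, by omega⟩ : Fin M), (⟨i + 1, by omega⟩ : Fin M)),
         ((⟨i, by omega⟩ : Fin M), (⟨i + 1, by omega⟩ : Fin M))} := by
      ext p
      simp only [Finset.mem_filter, Finset.mem_univ, true_and, Finset.mem_insert,
        Finset.mem_singleton, Prod.ext_iff, Fin.ext_iff, Fin.lt_def]
      omega
    rw [hset]
    rw [Finset.prod_insert (by simp only [Finset.mem_insert, Finset.mem_singleton, Prod.ext_iff, Fin.ext_iff]; omega),
      Finset.prod_insert (by simp only [Finset.mem_insert, Finset.mem_singleton, Prod.ext_iff, Fin.ext_iff]; omega),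
      Finset.prod_singleton]
    rfl

lemma key (β γ x y z : ℂ) :
    Pcub β γ (y-x)*Pcub β γ (z-x)*Pcub β γ (z-y)*(x-2*y+z)
    - Pcub β γ (x-y)*Pcub β γ (z-y)*Pcub β γ (z-x)*(y-2*x+z)
    - Pcub β γ (z-x)*Pcub β γ (y-x)*Pcub β γ (y-z)*(x-2*z+y)
    - Pcub β γ (y-z)*Pcub β γ (x-z)*Pcub β γ (x-y)*(z-2*y+x)
    + Pcub β γ (z-y)*Pcub β γ (x-y)*Pcub β γ (x-z)*(y-2*z+x)
    + Pcub β γ (x-z)*Pcub β γ (y-z)*Pcub β γ (y-x)*(z-2*x+y) = 0 := by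
  simp only [Pcub]; ring

lemma sixterm (β γ : ℂ) (M i : ℕ) (h1 : 1 ≤ i) (h2 : i + 2 ≤ M) (w : Fin M → ℂ)
    (A : Equiv.Perm (Fin M) → ℂ)
    (hA : ∀ σ : Equiv.Perm (Fin M), A σ = ((Equiv.Perm.sign σ : ℤ) : ℂ) *
      Pprod β γ M 1 M (w ∘ σ) *
      (w (σ ⟨i - 1, by omega⟩) - 2 * w (σ ⟨i, by omega⟩) + w (σ ⟨i + 1, by omega⟩))) :
    A 1 + A (Equiv.swap ⟨i - 1, by omega⟩ ⟨i, by omega⟩)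
      + A (Equiv.swap ⟨i, by omega⟩ ⟨i + 1, by omega⟩)
      + A (Equiv.swap ⟨i - 1, by omega⟩ ⟨i + 1, by omega⟩)
      + A (Equiv.swap ⟨i - 1, by omega⟩ ⟨i, by omega⟩ *
          Equiv.swap ⟨i, by omega⟩ ⟨i + 1, by omega⟩)
      + A (Equiv.swap ⟨i, by omega⟩ ⟨i + 1, by omega⟩ *
          Equiv.swap ⟨i - 1, by omega⟩ ⟨i, by omega⟩) = 0 := by
  have hia : i - 1 < M := by omega
  have him : i < M := by omega
  have hic : i + 1 < M := by omega
  have ham : (⟨i - 1, hia⟩ : Fin M) ≠ ⟨i, him⟩ := by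
    simp only [ne_eq, Fin.mk.injEq]; omega
  have hac : (⟨i - 1, hia⟩ : Fin M) ≠ ⟨i + 1, hic⟩ := by
    simp only [ne_eq, Fin.mk.injEq]; omega
  have hmc : (⟨i, him⟩ : Fin M) ≠ ⟨i + 1, hic⟩ := by
    simp only [ne_eq, Fin.mk.injEq]; omega
  have hma := ham.symm
  have hca := hac.symm
  have hcm := hmc.symm
  have hne : ∀ j : Fin M, ¬(i - 1 ≤ j.val ∧ j.val ≤ i + 1) →
      j ≠ ⟨i - 1, hia⟩ ∧ j ≠ ⟨i, him⟩ ∧ j ≠ ⟨i + 1, hic⟩ := by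
    intro j hj
    refine ⟨fun h => hj ?_, fun h => hj ?_, fun h => hj ?_⟩ <;> subst h
    · exact ⟨le_rfl, show i - 1 ≤ i + 1 by omega⟩
    · exact ⟨show i - 1 ≤ i by omega, show i ≤ i + 1 by omega⟩
    · exact ⟨show i - 1 ≤ i + 1 by omega, le_rfl⟩
  have hf1 : ∀ j : Fin M, ¬(i - 1 ≤ j.val ∧ j.val ≤ i + 1) →
      (1 : Equiv.Perm (Fin M)) j = j := fun j _ => rfl
  have hf2 : ∀ j : Fin M, ¬(i - 1 ≤ j.val ∧ j.val ≤ i + 1) →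
      Equiv.swap (⟨i - 1, hia⟩ : Fin M) ⟨i, him⟩ j = j :=
    fun j hj => Equiv.swap_apply_of_ne_of_ne (hne j hj).1 (hne j hj).2.1
  have hf3 : ∀ j : Fin M, ¬(i - 1 ≤ j.val ∧ j.val ≤ i + 1) →
      Equiv.swap (⟨i, him⟩ : Fin M) ⟨i + 1, hic⟩ j = j :=
    fun j hj => Equiv.swap_apply_of_ne_of_ne (hne j hj).2.1 (hne j hj).2.2
  have hf4 : ∀ j : Fin M, ¬(i - 1 ≤ j.val ∧ j.val ≤ i + 1) →
      Equiv.swap (⟨i - 1, hia⟩ : Fin M) ⟨i + 1, hic⟩ j = j :=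
    fun j hj => Equiv.swap_apply_of_ne_of_ne (hne j hj).1 (hne j hj).2.2
  have hf5 : ∀ j : Fin M, ¬(i - 1 ≤ j.val ∧ j.val ≤ i + 1) →
      (Equiv.swap (⟨i - 1, hia⟩ : Fin M) ⟨i, him⟩ *
        Equiv.swap (⟨i, him⟩ : Fin M) ⟨i + 1, hic⟩) j = j := by
    intro j hj
    rw [Equiv.Perm.mul_apply, hf3 j hj, hf2 j hj]
  have hf6 : ∀ j : Fin M, ¬(i - 1 ≤ j.val ∧ j.val ≤ i + 1) →
      (Equiv.swap (⟨i, him⟩ : Fin M) ⟨i + 1, hic⟩ *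
        Equiv.swap (⟨i - 1, hia⟩ : Fin M) ⟨i, him⟩) j = j := by
    intro j hj
    rw [Equiv.Perm.mul_apply, hf2 j hj, hf3 j hj]
  simp only [hA]
  rw [factor β γ M i h1 h2 w 1 hf1, factor β γ M i h1 h2 w _ hf2,
    factor β γ M i h1 h2 w _ hf3, factor β γ M i h1 h2 w _ hf4,
    factor β γ M i h1 h2 w _ hf5, factor β γ M i h1 h2 w _ hf6]
  simp only [Equiv.Perm.one_apply, Equiv.Perm.mul_apply, Equiv.swap_apply_left,
    Equiv.swap_apply_right, Equiv.swap_apply_of_ne_of_ne ham hac,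
    Equiv.swap_apply_of_ne_of_ne hca hcm, Equiv.swap_apply_of_ne_of_ne hma hmc,
    Equiv.Perm.sign_one, map_mul, Equiv.Perm.sign_swap ham, Equiv.Perm.sign_swap hmc,
    Equiv.Perm.sign_swap hac, Units.val_mul, Units.val_neg, Units.val_one,
    Int.cast_mul, Int.cast_neg, Int.cast_one, neg_neg, one_mul, mul_one, neg_mul, mul_neg]
  obtain ⟨C, hC⟩ : ∃ C : ℂ, (∏ p ∈ Finset.univ.filter (fun p : Fin M × Fin M =>
      p.1 < p.2 ∧ ¬((i - 1 ≤ p.1.val ∧ p.1.val ≤ i + 1) ∧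
        (i - 1 ≤ p.2.val ∧ p.2.val ≤ i + 1))),
      Pcub β γ (w p.2 - w p.1)) = C := ⟨_, rfl⟩
  rw [hC]
  linear_combination C * key β γ (w ⟨i - 1, hia⟩) (w ⟨i, him⟩) (w ⟨i + 1, hic⟩)


theorem stmt_4 (M : ℕ) (hM : 3 ≤ M) (β γ : ℂ) (i : ℕ) (hi1 : 1 ≤ i) (hi2 : i ≤ M - 2) :
    PReducible β γ M 1 M (fun v : Fin M → ℂ =>
      v ⟨i - 1, by omega⟩ - 2 * v ⟨i, by omega⟩ + v ⟨i + 1, by omega⟩) := by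
  intro v
  have h2 : i + 2 ≤ M := by omega
  set G : (Fin M → ℂ) → ℂ := fun u : Fin M → ℂ =>
    u ⟨i - 1, by omega⟩ - 2 * u ⟨i, by omega⟩ + u ⟨i + 1, by omega⟩ with hG
  show Pop β γ M 1 M G v = 0
  set F : Equiv.Perm (Fin M) → ℂ := fun s =>
    ((Equiv.Perm.sign s : ℤ) : ℂ) * Pprod β γ M 1 M (v ∘ s) * G (v ∘ s) with hF
  have hPop : Pop β γ M 1 M G v = ∑ s : Equiv.Perm (Fin M), F s :=
    Finset.sum_congr rfl fun s _ =>
      if_pos (fun j hj => absurd ⟨Nat.le_add_left 1 _, j.isLt⟩ hj)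
  have hzero : ∀ s : Equiv.Perm (Fin M),
      F (s * 1) + F (s * Equiv.swap ⟨i - 1, by omega⟩ ⟨i, by omega⟩)
        + F (s * Equiv.swap ⟨i, by omega⟩ ⟨i + 1, by omega⟩)
        + F (s * Equiv.swap ⟨i - 1, by omega⟩ ⟨i + 1, by omega⟩)
        + F (s * (Equiv.swap ⟨i - 1, by omega⟩ ⟨i, by omega⟩ *
            Equiv.swap ⟨i, by omega⟩ ⟨i + 1, by omega⟩))
        + F (s * (Equiv.swap ⟨i, by omega⟩ ⟨i + 1, by omega⟩ *
            Equiv.swap ⟨i - 1, by omega⟩ ⟨i, by omega⟩)) = 0 := by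
    intro s
    have hterm : ∀ σ : Equiv.Perm (Fin M), F (s * σ) =
        ((Equiv.Perm.sign s : ℤ) : ℂ) * (((Equiv.Perm.sign σ : ℤ) : ℂ) *
          Pprod β γ M 1 M ((v ∘ s) ∘ σ) *
          ((v ∘ s) (σ ⟨i - 1, by omega⟩) - 2 * (v ∘ s) (σ ⟨i, by omega⟩) +
            (v ∘ s) (σ ⟨i + 1, by omega⟩))) := by
      intro σ
      have hv : v ∘ ⇑(s * σ) = (v ∘ ⇑s) ∘ ⇑σ := by funext x; rfl
      simp only [hF, hv, map_mul, Units.val_mul, Int.cast_mul, hG]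
      ring_nf
      rfl
    simp only [hterm]
    rw [← mul_add, ← mul_add, ← mul_add, ← mul_add, ← mul_add]
    rw [sixterm β γ M i hi1 h2 (v ∘ s) _ (fun σ => rfl), mul_zero]
  have hinv : ∀ σ : Equiv.Perm (Fin M),
      ∑ s : Equiv.Perm (Fin M), F (s * σ) = ∑ s : Equiv.Perm (Fin M), F s :=
    fun σ => Fintype.sum_equiv (Equiv.mulRight σ) _ _ (fun s => rfl)
  have e1 : ∑ s : Equiv.Perm (Fin M),
      (F (s * 1) + F (s * Equiv.swap ⟨i - 1, by omega⟩ ⟨i, by omega⟩)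
        + F (s * Equiv.swap ⟨i, by omega⟩ ⟨i + 1, by omega⟩)
        + F (s * Equiv.swap ⟨i - 1, by omega⟩ ⟨i + 1, by omega⟩)
        + F (s * (Equiv.swap ⟨i - 1, by omega⟩ ⟨i, by omega⟩ *
            Equiv.swap ⟨i, by omega⟩ ⟨i + 1, by omega⟩))
        + F (s * (Equiv.swap ⟨i, by omega⟩ ⟨i + 1, by omega⟩ *
            Equiv.swap ⟨i - 1, by omega⟩ ⟨i, by omega⟩))) = 0 := by
    rw [Finset.sum_congr rfl fun s _ => hzero s]
    exact Finset.sum_const_zero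
  rw [Finset.sum_add_distrib, Finset.sum_add_distrib, Finset.sum_add_distrib,
    Finset.sum_add_distrib, Finset.sum_add_distrib, hinv, hinv, hinv, hinv, hinv, hinv] at e1
  have e2 : (6 : ℂ) * ∑ s : Equiv.Perm (Fin M), F s = 0 := by
    rw [← e1]; ring
  rw [hPop]
  exact (mul_eq_zero.mp e2).resolve_left (by norm_num)
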